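/- Let d ≥ 3, q ≥ 2, w ≥ 0 and define Φ(t) = (√(1+w/q) cos t + √((q−1)w/q) sin t)^d + (q−1)(√(1+w/q) cos t − √(w/(q(q−1))) sin t)^d. Then Φ'(0) = 0 and Φ''(0) = d·(1+w/q)^{d/2−1}·((d−2)w − q). In particular, if w < q/(d−2) then Φ has a strict local maximum at t = 0, and if w > q/(d−2) then Φ has a strict local minimum at t = 0. -/

import Mathlib

open Real Set Filter

lemma aux_max {f g : ℝ → ℝ} {S : ℝ} (hf : ∀ t, HasDerivAt f (g t) t)
    (hg0 : g 0 = 0) (hg : HasDerivAt g S 0) (hS : S < 0) :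
    ∀ᶠ t in nhdsWithin 0 {(0:ℝ)}ᶜ, f t < f 0 := by
  have hcont : Continuous f :=
    continuous_iff_continuousAt.mpr fun x => (hf x).differentiableAt.continuousAt
  have hslope := hasDerivAt_iff_tendsto_slope.mp hg
  have hev : ∀ᶠ t in nhdsWithin 0 {(0:ℝ)}ᶜ, slope g 0 t < 0 :=
    hslope.eventually_lt_const hS
  rw [eventually_nhdsWithin_iff, Metric.eventually_nhds_iff] at hev
  obtain ⟨ε, hε, hball⟩ := hev
  have hsign : ∀ t : ℝ, t ≠ 0 → |t| < ε → g t / t < 0 := by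
    intro t ht htε
    have := hball (y := t) (by simpa [Real.dist_eq] using htε) ht
    rwa [slope_def_field, hg0, sub_zero, sub_zero] at this
  set e := ε / 2 with he_def
  have he : 0 < e := by positivity
  have hanti : StrictAntiOn f (Icc 0 e) := by
    apply strictAntiOn_of_deriv_neg (convex_Icc 0 e) hcont.continuousOn
    intro x hx
    rw [interior_Icc] at hx
    rw [(hf x).deriv]
    have h := hsign x (ne_of_gt hx.1) (by rw [abs_of_pos hx.1]; linarith [hx.2])
    rcases div_neg_iff.mp h with ⟨_, h2⟩ | ⟨h1, _⟩
    · linarith [hx.1]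
    · exact h1
  have hmono : StrictMonoOn f (Icc (-e) 0) := by
    apply strictMonoOn_of_deriv_pos (convex_Icc (-e) 0) hcont.continuousOn
    intro x hx
    rw [interior_Icc] at hx
    rw [(hf x).deriv]
    have h := hsign x (ne_of_lt hx.2) (by rw [abs_of_neg hx.2]; linarith [hx.1])
    rcases div_neg_iff.mp h with ⟨h1, _⟩ | ⟨_, h2⟩
    · exact h1
    · linarith [hx.2]
  rw [eventually_nhdsWithin_iff, Metric.eventually_nhds_iff]
  refine ⟨e, he, fun {t} hdist ht => ?_⟩
  have habs : |t| < e := by simpa [Real.dist_eq] using hdist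
  rcases lt_or_gt_of_ne (show t ≠ 0 from ht) with h | h
  · exact hmono (by constructor <;> [linarith [abs_lt.mp habs]; linarith]) ⟨by linarith, le_refl 0⟩ h
  · exact hanti ⟨le_refl 0, by linarith⟩ ⟨h.le, by linarith [abs_lt.mp habs]⟩ h

theorem stmt_17 (d : ℕ) (hd : 3 ≤ d) (q w : ℝ) (hq : 2 ≤ q) (hw : 0 ≤ w)
    (Φ : ℝ → ℝ)
    (hΦ : Φ = fun t =>
      (Real.sqrt (1 + w / q) * cos t + Real.sqrt ((q - 1) * w / q) * sin t) ^ d +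
        (q - 1) * (Real.sqrt (1 + w / q) * cos t -
          Real.sqrt (w / (q * (q - 1))) * sin t) ^ d) :
    deriv Φ 0 = 0 ∧
    deriv (deriv Φ) 0 = d * (1 + w / q) ^ ((d : ℝ) / 2 - 1) * ((d - 2) * w - q) ∧
    (w < q / ((d : ℝ) - 2) → ∀ᶠ t in nhdsWithin 0 {(0 : ℝ)}ᶜ, Φ t < Φ 0) ∧
    (q / ((d : ℝ) - 2) < w → ∀ᶠ t in nhdsWithin 0 {(0 : ℝ)}ᶜ, Φ 0 < Φ t) := by
  have hq0 : (0:ℝ) < q := by linarith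
  have hq1 : (0:ℝ) < q - 1 := by linarith
  set a := Real.sqrt (1 + w / q) with ha_def
  set b := Real.sqrt ((q - 1) * w / q) with hb_def
  set c := Real.sqrt (w / (q * (q - 1))) with hc_def
  have ha2 : a ^ 2 = 1 + w / q := Real.sq_sqrt (by positivity)
  have hb2 : b ^ 2 = (q - 1) * w / q := Real.sq_sqrt (by positivity)
  have hc2 : c ^ 2 = w / (q * (q - 1)) := Real.sq_sqrt (by positivity)
  have ha0 : 0 < a := Real.sqrt_pos.mpr (by positivity)
  have hbc : b = (q - 1) * c := by
    rw [hb_def, hc_def, show ((q - 1) * w / q) = (q - 1) ^ 2 * (w / (q * (q - 1))) by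
      field_simp]
    rw [Real.sqrt_mul (by positivity), Real.sqrt_sq hq1.le]
  -- first derivative
  set G : ℝ → ℝ := fun t =>
      (d : ℝ) * (a * cos t + b * sin t) ^ (d - 1) * (a * -sin t + b * cos t) +
      (q - 1) * ((d : ℝ) * (a * cos t - c * sin t) ^ (d - 1) * (a * -sin t - c * cos t))
    with hGdef
  have hG : ∀ t, HasDerivAt Φ (G t) t := by
    intro t
    rw [hΦ]
    exact ((((Real.hasDerivAt_cos t).const_mul a).add
        ((Real.hasDerivAt_sin t).const_mul b)).pow d).add
      (((((Real.hasDerivAt_cos t).const_mul a).sub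
        ((Real.hasDerivAt_sin t).const_mul c)).pow d).const_mul (q - 1))
  have hΦd : deriv Φ = G := funext fun t => (hG t).deriv
  -- second derivative at 0
  set S : ℝ := ((d : ℝ) * ((d - 1 : ℕ) * (a * cos 0 + b * sin 0) ^ (d - 1 - 1) *
        (a * -sin 0 + b * cos 0))) * (a * -sin 0 + b * cos 0) +
      ((d : ℝ) * (a * cos 0 + b * sin 0) ^ (d - 1)) * (a * -cos 0 + b * -sin 0) +
      (q - 1) * (((d : ℝ) * ((d - 1 : ℕ) * (a * cos 0 - c * sin 0) ^ (d - 1 - 1) *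
        (a * -sin 0 - c * cos 0))) * (a * -sin 0 - c * cos 0) +
        ((d : ℝ) * (a * cos 0 - c * sin 0) ^ (d - 1)) * (a * -cos 0 - c * -sin 0)) with hSdef
  have hG0 : HasDerivAt G S 0 := by
    refine HasDerivAt.add ?_ (HasDerivAt.const_mul _ ?_)
    · exact (((((Real.hasDerivAt_cos 0).const_mul a).add
          ((Real.hasDerivAt_sin 0).const_mul b)).pow (d - 1)).const_mul (d : ℝ)).mul
        ((((Real.hasDerivAt_sin 0).neg.const_mul a)).add ((Real.hasDerivAt_cos 0).const_mul b))
    · exact (((((Real.hasDerivAt_cos 0).const_mul a).sub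
          ((Real.hasDerivAt_sin 0).const_mul c)).pow (d - 1)).const_mul (d : ℝ)).mul
        ((((Real.hasDerivAt_sin 0).neg.const_mul a)).sub ((Real.hasDerivAt_cos 0).const_mul c))
  have hG0val : G 0 = 0 := by
    rw [hGdef]
    simp only [Real.sin_zero, Real.cos_zero]
    rw [hbc]; ring
  have hsum : b ^ 2 + (q - 1) * c ^ 2 = w := by
    rw [hb2, hc2]; field_simp; ring
  have haq : q * a ^ 2 = q + w := by
    rw [ha2]; field_simp
  have hSval : S = (d : ℝ) * a ^ (d - 2) * (((d : ℝ) - 2) * w - q) := by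
    have e1 : d - 1 - 1 = d - 2 := by omega
    have e2 : a ^ (d - 1) = a ^ (d - 2) * a := by
      rw [← pow_succ]; congr 1; omega
    have e3 : ((d - 1 : ℕ) : ℝ) = (d : ℝ) - 1 := by
      rw [Nat.cast_sub (by omega : 1 ≤ d)]; norm_num
    rw [hSdef, Real.sin_zero, Real.cos_zero, e1]
    simp only [neg_zero, mul_zero, mul_one, add_zero, zero_add, sub_zero, zero_sub,
      mul_neg_one, mul_neg]
    rw [e2, e3]
    linear_combination (d : ℝ) * ((d : ℝ) - 1) * a ^ (d - 2) * hsum -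
      (d : ℝ) * a ^ (d - 2) * haq
  have key : a ^ (d - 2) = (1 + w / q) ^ ((d : ℝ) / 2 - 1) := by
    rw [ha_def, Real.sqrt_eq_rpow, ← Real.rpow_natCast _ (d - 2),
      ← Real.rpow_mul (by positivity)]
    congr 1
    rw [Nat.cast_sub (by omega : 2 ≤ d)]
    push_cast; ring
  have hApos : (0 : ℝ) < (d : ℝ) * a ^ (d - 2) :=
    mul_pos (by exact_mod_cast Nat.lt_of_lt_of_le (by norm_num) hd) (pow_pos ha0 _)
  have hdR : (0 : ℝ) < (d : ℝ) - 2 := by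
    have : (3 : ℝ) ≤ (d : ℝ) := by exact_mod_cast hd
    linarith
  refine ⟨by rw [hΦd]; exact hG0val, ?_, ?_, ?_⟩
  · rw [hΦd, hG0.deriv, hSval, key]
  · intro hlt
    have hSneg : S < 0 := by
      rw [hSval]
      apply mul_neg_of_pos_of_neg hApos
      have := (lt_div_iff₀ hdR).mp hlt
      linarith
    exact aux_max hG hG0val hG0 hSneg
  · intro hlt
    have hSpos : 0 < S := by
      rw [hSval]
      apply mul_pos hApos
      have := (div_lt_iff₀ hdR).mp hlt
      linarith
    have := aux_max (f := fun t => -Φ t) (g := fun t => -G t)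
      (fun t => (hG t).neg) (by simp [hG0val]) hG0.neg (by linarith)
    exact this.mono fun t ht => by simpa using ht
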